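/- Let X be a real m×p matrix, H a real r×p matrix, Y ∈ ℝᵐ, D ∈ ℝʳ, and η > 0 such that H(XᵀX + ηI)⁻¹Hᵀ is invertible. Set Z_η = (XᵀX + ηI)⁻¹, Θ̂_LS = Z_ηXᵀY and Θ̂ = Θ̂_LS − Z_ηHᵀ(HZ_ηHᵀ)⁻¹(HΘ̂_LS − D). Then HΘ̂ = D, and for every Θ ∈ ℝᵖ with HΘ = D one has ‖Y − XΘ̂‖² + η‖Θ̂‖² ≤ ‖Y − XΘ‖² + η‖Θ‖²; i.e., Θ̂ minimizes the Tikhonov-regularized cost ‖Y − XΘ‖² + η‖Θ‖² subject to HΘ = D. -/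

import Mathlib

open Matrix

/-- the constrained Tikhonov-regularized estimator satisfies the
constraint and minimizes ‖Y − XΘ‖² + η‖Θ‖² subject to HΘ = D. -/
theorem tikhonov_cls_optimality
    (m p r : ℕ)
    (X : Matrix (Fin m) (Fin p) ℝ)
    (H : Matrix (Fin r) (Fin p) ℝ)
    (Y : Fin m → ℝ) (D : Fin r → ℝ)
    (η : ℝ) (hη : 0 < η)
    (hH : IsUnit (H * (Xᵀ * X + η • (1 : Matrix (Fin p) (Fin p) ℝ))⁻¹ * Hᵀ).det)
    (Zη : Matrix (Fin p) (Fin p) ℝ)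
    (hZη : Zη = (Xᵀ * X + η • (1 : Matrix (Fin p) (Fin p) ℝ))⁻¹)
    (ΘLS : Fin p → ℝ) (hLS : ΘLS = Zη.mulVec (Xᵀ.mulVec Y))
    (Θhat : Fin p → ℝ)
    (hΘhat : Θhat = ΘLS - (Zη * Hᵀ * (H * Zη * Hᵀ)⁻¹).mulVec (H.mulVec ΘLS - D)) :
    H.mulVec Θhat = D ∧
    ∀ Θ : Fin p → ℝ, H.mulVec Θ = D →
      (∑ i, (Y i - X.mulVec Θhat i) ^ 2) + η * ∑ j, (Θhat j) ^ 2
        ≤ (∑ i, (Y i - X.mulVec Θ i) ^ 2) + η * ∑ j, (Θ j) ^ 2 := by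
  set A := Xᵀ * X + η • (1 : Matrix (Fin p) (Fin p) ℝ) with hA
  have hApd : A.PosDef := by
    apply Matrix.PosDef.posSemidef_add
    · simpa using Matrix.posSemidef_conjTranspose_mul_self X
    · rw [smul_one_eq_diagonal]
      exact Matrix.PosDef.diagonal fun _ => hη
  have hAu : IsUnit A.det := hApd.det_pos.ne'.isUnit
  have hAZ : A * Zη = 1 := by rw [hZη]; exact Matrix.mul_nonsing_inv A hAu
  have hM : (H * Zη * Hᵀ) * (H * Zη * Hᵀ)⁻¹ = 1 := by
    apply Matrix.mul_nonsing_inv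
    rw [hZη]; exact hH
  -- constraint
  have hcon : H.mulVec Θhat = D := by
    rw [hΘhat, mulVec_sub, mulVec_mulVec,
      show H * (Zη * Hᵀ * (H * Zη * Hᵀ)⁻¹) = H * Zη * Hᵀ * (H * Zη * Hᵀ)⁻¹ by
        simp only [Matrix.mul_assoc], hM, one_mulVec]
    simp
  refine ⟨hcon, ?_⟩
  -- Lagrange multiplier identity
  set L : Fin r → ℝ := (H * Zη * Hᵀ)⁻¹.mulVec (H.mulVec ΘLS - D) with hL
  have hALS : A.mulVec ΘLS = Xᵀ.mulVec Y := by
    rw [hLS, mulVec_mulVec, hAZ, one_mulVec]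
  have key : A.mulVec Θhat = Xᵀ.mulVec Y - Hᵀ.mulVec L := by
    rw [hΘhat, mulVec_sub, hALS, mulVec_mulVec]
    congr 1
    have : A * (Zη * Hᵀ * (H * Zη * Hᵀ)⁻¹) = Hᵀ * (H * Zη * Hᵀ)⁻¹ := by
      calc A * (Zη * Hᵀ * (H * Zη * Hᵀ)⁻¹) = (A * Zη) * (Hᵀ * (H * Zη * Hᵀ)⁻¹) := by
            simp only [Matrix.mul_assoc]
        _ = Hᵀ * (H * Zη * Hᵀ)⁻¹ := by rw [hAZ, Matrix.one_mul]
    rw [this, ← mulVec_mulVec]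
  have hAt : Aᵀ = A := by
    have := hApd.isHermitian
    simpa [Matrix.IsHermitian, conjTranspose_eq_transpose_of_trivial] using this
  have hsymm : ∀ u w : Fin p → ℝ, (A.mulVec u) ⬝ᵥ w = (A.mulVec w) ⬝ᵥ u := by
    intro u w
    rw [dotProduct_comm, dotProduct_mulVec, ← mulVec_transpose, hAt]
  intro Θ hΘ
  set d : Fin p → ℝ := Θ - Θhat with hd
  have hHd : H.mulVec d = 0 := by rw [hd, mulVec_sub, hΘ, hcon, sub_self]
  have hzero : (Hᵀ.mulVec L) ⬝ᵥ d = 0 := by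
    rw [mulVec_transpose, ← dotProduct_mulVec, hHd, dotProduct_zero]
  -- rewrite sums as dot products
  have esum : ∀ (n : ℕ) (v : Fin n → ℝ), ∑ i, v i ^ 2 = v ⬝ᵥ v := by
    intro n v; simp [dotProduct, sq]
  have expand : ∀ v : Fin p → ℝ,
      (∑ i, (Y i - X.mulVec v i) ^ 2) + η * ∑ j, (v j) ^ 2
        = Y ⬝ᵥ Y - 2 * ((Xᵀ.mulVec Y) ⬝ᵥ v) + (A.mulVec v) ⬝ᵥ v := by
    intro v
    have h1 : ∑ i, (Y i - X.mulVec v i) ^ 2 = (Y - X.mulVec v) ⬝ᵥ (Y - X.mulVec v) := by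
      rw [esum]; rfl
    have h2 : Y ⬝ᵥ (X.mulVec v) = (Xᵀ.mulVec Y) ⬝ᵥ v := by
      rw [dotProduct_mulVec, ← mulVec_transpose]
    have h3 : (X.mulVec v) ⬝ᵥ (X.mulVec v) = ((Xᵀ * X).mulVec v) ⬝ᵥ v := by
      rw [dotProduct_mulVec, ← mulVec_transpose, mulVec_mulVec, dotProduct_comm]
    have h4 : (A.mulVec v) ⬝ᵥ v = ((Xᵀ * X).mulVec v) ⬝ᵥ v + η * (v ⬝ᵥ v) := by
      rw [hA, add_mulVec, add_dotProduct, smul_mulVec, one_mulVec, smul_dotProduct]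
      simp [smul_eq_mul]
    rw [h1, esum, sub_dotProduct, dotProduct_sub, dotProduct_sub, h2, h3,
      dotProduct_comm (X.mulVec v) Y, h2, h4]
    ring
  rw [expand Θhat, expand Θ]
  have hΘd : Θ = Θhat + d := by rw [hd]; abel
  have hq : (A.mulVec Θ) ⬝ᵥ Θ
      = (A.mulVec Θhat) ⬝ᵥ Θhat + 2 * ((A.mulVec Θhat) ⬝ᵥ d) + (A.mulVec d) ⬝ᵥ d := by
    rw [hΘd, mulVec_add, add_dotProduct, dotProduct_add, dotProduct_add,
      hsymm d Θhat]
    ring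
  have hcross : (Xᵀ.mulVec Y) ⬝ᵥ d = (A.mulVec Θhat) ⬝ᵥ d := by
    have : Xᵀ.mulVec Y = A.mulVec Θhat + Hᵀ.mulVec L := by rw [key]; abel
    rw [this, add_dotProduct, hzero, add_zero]
  have hlin : (Xᵀ.mulVec Y) ⬝ᵥ Θ = (Xᵀ.mulVec Y) ⬝ᵥ Θhat + (Xᵀ.mulVec Y) ⬝ᵥ d := by
    rw [hΘd, dotProduct_add]
  have hpos : 0 ≤ (A.mulVec d) ⬝ᵥ d := by
    by_cases hd0 : d = 0
    · simp [hd0]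
    · have := (Matrix.posDef_iff_dotProduct_mulVec.mp hApd).2 hd0
      simp only [star_trivial] at this
      rw [dotProduct_comm]
      exact le_of_lt this
  rw [hq, hlin, hcross]
  linarith
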